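/- For 0 < α ≤ β < 1 and probability measures P, R: (α/β)·((1−β)/(1−α))·D_β(P,R) ≤ D_α(P,R) ≤ D_β(P,R), where D_γ denotes the Rényi divergence of order γ. -/

import Mathlib

open MeasureTheory
open scoped ENNReal

/-- Hölder's inequality for nonnegative real integrands in "interpolation" form. -/
lemma holder_interp {Ω : Type*} [MeasurableSpace Ω] (μ : Measure Ω) {f g : Ω → ℝ}
    (hf : ∀ x, 0 ≤ f x) (hg : ∀ x, 0 ≤ g x)
    (hfm : Measurable f) (hgm : Measurable g)
    (hfi : Integrable f μ) (hgi : Integrable g μ)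
    {l : ℝ} (hl0 : 0 < l) (hl1 : l < 1) :
    ∫ x, f x ^ l * g x ^ (1 - l) ∂μ ≤ (∫ x, f x ∂μ) ^ l * (∫ x, g x ∂μ) ^ (1 - l) := by
  have h1l : (0:ℝ) < 1 - l := by linarith
  have hpq : (1/l).HolderConjugate (1/(1-l)) := by
    constructor
    · rw [one_div, one_div, inv_inv, inv_inv, inv_one]; ring
    · exact one_div_pos.mpr hl0
    · exact one_div_pos.mpr h1l
  have hFm : AEMeasurable (fun x => ENNReal.ofReal (f x) ^ l) μ :=
    ((ENNReal.measurable_ofReal.comp hfm).pow_const _).aemeasurable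
  have hGm : AEMeasurable (fun x => ENNReal.ofReal (g x) ^ (1 - l)) μ :=
    ((ENNReal.measurable_ofReal.comp hgm).pow_const _).aemeasurable
  have key := ENNReal.lintegral_mul_le_Lp_mul_Lq μ hpq hFm hGm
  have e1 : ∀ a : ℝ≥0∞, (a ^ l) ^ (1/l : ℝ) = a := fun a => by
    rw [← ENNReal.rpow_mul, mul_one_div_cancel hl0.ne', ENNReal.rpow_one]
  have e2 : ∀ a : ℝ≥0∞, (a ^ (1-l)) ^ (1/(1-l) : ℝ) = a := fun a => by
    rw [← ENNReal.rpow_mul, mul_one_div_cancel h1l.ne', ENNReal.rpow_one]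
  simp only [Pi.mul_apply, e1, e2, one_div_one_div] at key
  -- identify the lintegrals with real integrals
  have hF : ∫⁻ x, ENNReal.ofReal (f x) ∂μ = ENNReal.ofReal (∫ x, f x ∂μ) :=
    (ofReal_integral_eq_lintegral_ofReal hfi (Filter.Eventually.of_forall hf)).symm
  have hG : ∫⁻ x, ENNReal.ofReal (g x) ∂μ = ENNReal.ofReal (∫ x, g x ∂μ) :=
    (ofReal_integral_eq_lintegral_ofReal hgi (Filter.Eventually.of_forall hg)).symm
  rw [hF, hG] at key
  have hnn : ∀ x, 0 ≤ f x ^ l * g x ^ (1 - l) := fun x =>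
    mul_nonneg (Real.rpow_nonneg (hf x) _) (Real.rpow_nonneg (hg x) _)
  have hsm : AEStronglyMeasurable (fun x => f x ^ l * g x ^ (1 - l)) μ := by
    refine Measurable.aestronglyMeasurable ?_
    exact (((Real.continuous_rpow_const hl0.le).measurable).comp hfm).mul
      (((Real.continuous_rpow_const h1l.le).measurable).comp hgm)
  rw [integral_eq_lintegral_of_nonneg_ae (Filter.Eventually.of_forall hnn) hsm]
  have hptw : ∀ x, ENNReal.ofReal (f x ^ l * g x ^ (1 - l)) =
      ENNReal.ofReal (f x) ^ l * ENNReal.ofReal (g x) ^ (1 - l) := fun x => by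
    rw [ENNReal.ofReal_mul (Real.rpow_nonneg (hf x) _),
      ENNReal.ofReal_rpow_of_nonneg (hf x) hl0.le,
      ENNReal.ofReal_rpow_of_nonneg (hg x) h1l.le]
  have hLI : ∫⁻ x, ENNReal.ofReal (f x ^ l * g x ^ (1 - l)) ∂μ =
      ∫⁻ x, ENNReal.ofReal (f x) ^ l * ENNReal.ofReal (g x) ^ (1 - l) ∂μ :=
    lintegral_congr fun x => hptw x
  rw [hLI]
  have hne : ENNReal.ofReal (∫ x, f x ∂μ) ^ l * ENNReal.ofReal (∫ x, g x ∂μ) ^ (1-l) ≠ ⊤ :=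
    ENNReal.mul_ne_top (ENNReal.rpow_ne_top_of_nonneg hl0.le ENNReal.ofReal_ne_top)
      (ENNReal.rpow_ne_top_of_nonneg h1l.le ENNReal.ofReal_ne_top)
  calc (∫⁻ x, ENNReal.ofReal (f x) ^ l * ENNReal.ofReal (g x) ^ (1 - l) ∂μ).toReal
      ≤ (ENNReal.ofReal (∫ x, f x ∂μ) ^ l * ENNReal.ofReal (∫ x, g x ∂μ) ^ (1-l)).toReal :=
        ENNReal.toReal_mono hne key
    _ = (∫ x, f x ∂μ) ^ l * (∫ x, g x ∂μ) ^ (1 - l) := by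
        rw [ENNReal.toReal_mul, ← ENNReal.toReal_rpow, ← ENNReal.toReal_rpow,
          ENNReal.toReal_ofReal (integral_nonneg hf), ENNReal.toReal_ofReal (integral_nonneg hg)]

/-- Equivalence of Rényi divergences of orders in `(0,1)` (van Erven–Harremoës):
for `0 < α ≤ β < 1`, `(α/β)((1-β)/(1-α)) D_β ≤ D_α ≤ D_β`. -/
theorem renyi_order_equivalence {Ω : Type*} [MeasurableSpace Ω] (μ : Measure Ω)
    (p r : Ω → ℝ) (hp : ∀ x, 0 ≤ p x) (hr : ∀ x, 0 ≤ r x)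
    (hpm : Measurable p) (hrm : Measurable r)
    (hpi : Integrable p μ) (hri : Integrable r μ)
    (hp1 : ∫ x, p x ∂μ = 1) (hr1 : ∫ x, r x ∂μ = 1)
    (α β : ℝ) (hα : 0 < α) (hαβ : α ≤ β) (hβ : β < 1)
    (hintα : Integrable (fun x => (p x) ^ α * (r x) ^ (1 - α)) μ)
    (hintβ : Integrable (fun x => (p x) ^ β * (r x) ^ (1 - β)) μ) :
    (α / β) * ((1 - β) / (1 - α)) *
        ((1 / (β - 1)) * Real.log (∫ x, (p x) ^ β * (r x) ^ (1 - β) ∂μ))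
      ≤ (1 / (α - 1)) * Real.log (∫ x, (p x) ^ α * (r x) ^ (1 - α) ∂μ)
    ∧ (1 / (α - 1)) * Real.log (∫ x, (p x) ^ α * (r x) ^ (1 - α) ∂μ)
      ≤ (1 / (β - 1)) * Real.log (∫ x, (p x) ^ β * (r x) ^ (1 - β) ∂μ) := by
  rcases eq_or_lt_of_le hαβ with heq | hlt
  · subst heq
    have h1α : (1:ℝ) - α ≠ 0 := by intro h; linarith [hβ]
    rw [div_self hα.ne', div_self h1α, one_mul, one_mul]
    exact ⟨le_refl _, le_refl _⟩
  -- now α < β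
  have hβ0 : (0:ℝ) < β := lt_trans hα hlt
  have h1α : (0:ℝ) < 1 - α := by linarith
  have h1β : (0:ℝ) < 1 - β := by linarith
  set A := ∫ x, (p x) ^ α * (r x) ^ (1 - α) ∂μ with hA
  set B := ∫ x, (p x) ^ β * (r x) ^ (1 - β) ∂μ with hB
  have hA0 : 0 ≤ A := integral_nonneg fun x =>
    mul_nonneg (Real.rpow_nonneg (hp x) _) (Real.rpow_nonneg (hr x) _)
  have hB0 : 0 ≤ B := integral_nonneg fun x =>
    mul_nonneg (Real.rpow_nonneg (hp x) _) (Real.rpow_nonneg (hr x) _)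
  -- Hölder 1 : A ≤ B ^ (α/β)
  have hl0 : 0 < α / β := div_pos hα hβ0
  have hl1 : α / β < 1 := (div_lt_one hβ0).mpr hlt
  have hm0 : 0 < (1 - β) / (1 - α) := div_pos h1β h1α
  have hm1 : (1 - β) / (1 - α) < 1 := (div_lt_one h1α).mpr (by linarith)
  have hfm : Measurable fun x => p x ^ β * r x ^ (1 - β) :=
    (((Real.continuous_rpow_const hβ0.le).measurable).comp hpm).mul
      (((Real.continuous_rpow_const h1β.le).measurable).comp hrm)
  have hfm' : Measurable fun x => p x ^ α * r x ^ (1 - α) :=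
    (((Real.continuous_rpow_const hα.le).measurable).comp hpm).mul
      (((Real.continuous_rpow_const h1α.le).measurable).comp hrm)
  have h1 : A ≤ B ^ (α / β) := by
    have key := holder_interp μ (f := fun x => p x ^ β * r x ^ (1 - β)) (g := r)
      (fun x => mul_nonneg (Real.rpow_nonneg (hp x) _) (Real.rpow_nonneg (hr x) _)) hr
      hfm hrm hintβ hri hl0 hl1
    rw [hr1, Real.one_rpow, mul_one] at key
    have hptw : ∀ x, (p x ^ β * r x ^ (1 - β)) ^ (α/β) * r x ^ (1 - α/β)
        = p x ^ α * r x ^ (1 - α) := by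
      intro x
      have hsum : (1-β) * (α/β) + (1 - α/β) = 1 - α := by field_simp; ring
      rw [Real.mul_rpow (Real.rpow_nonneg (hp x) _) (Real.rpow_nonneg (hr x) _),
        ← Real.rpow_mul (hp x), ← Real.rpow_mul (hr x), mul_assoc,
        ← Real.rpow_add' (hr x) (by rw [hsum]; exact h1α.ne'),
        show β * (α/β) = α by field_simp, hsum]
    calc A = ∫ x, (p x ^ β * r x ^ (1 - β)) ^ (α/β) * r x ^ (1 - α/β) ∂μ := by
            rw [hA]; exact (integral_congr_ae (Filter.Eventually.of_forall
              fun x => hptw x)).symm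
      _ ≤ B ^ (α / β) := key
  -- Hölder 2 : B ≤ A ^ ((1-β)/(1-α))
  have h2 : B ≤ A ^ ((1 - β) / (1 - α)) := by
    have key := holder_interp μ (f := fun x => p x ^ α * r x ^ (1 - α)) (g := p)
      (fun x => mul_nonneg (Real.rpow_nonneg (hp x) _) (Real.rpow_nonneg (hr x) _)) hp
      hfm' hpm hintα hpi hm0 hm1
    rw [hp1, Real.one_rpow, mul_one] at key
    set m := (1 - β) / (1 - α) with hmdef
    have hptw : ∀ x, (p x ^ α * r x ^ (1 - α)) ^ m * p x ^ (1 - m)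
        = p x ^ β * r x ^ (1 - β) := by
      intro x
      have hsum : α * m + (1 - m) = β := by rw [hmdef]; field_simp; ring
      rw [Real.mul_rpow (Real.rpow_nonneg (hp x) _) (Real.rpow_nonneg (hr x) _),
        ← Real.rpow_mul (hp x), ← Real.rpow_mul (hr x), mul_right_comm,
        ← Real.rpow_add' (hp x) (by rw [hsum]; exact hβ0.ne'), hsum,
        show (1 - α) * m = 1 - β by rw [hmdef]; field_simp]
    calc B = ∫ x, (p x ^ α * r x ^ (1 - α)) ^ m * p x ^ (1 - m) ∂μ := by
            rw [hB]; exact (integral_congr_ae (Filter.Eventually.of_forall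
              fun x => hptw x)).symm
      _ ≤ A ^ m := key
  rcases eq_or_lt_of_le hA0 with hAz | hApos
  · -- A = 0, hence B = 0 as well
    have hBz : B = 0 := le_antisymm (by
      rw [← hAz, Real.zero_rpow hm0.ne'] at h2; exact h2) hB0
    rw [← hAz, hBz, Real.log_zero]
    simp
  · -- A > 0, hence B > 0
    have hBpos : 0 < B := by
      rcases eq_or_lt_of_le hB0 with hBz | hBpos
      · exfalso; rw [← hBz, Real.zero_rpow hl0.ne'] at h1; linarith
      · exact hBpos
    have l1 : Real.log A ≤ (α / β) * Real.log B := by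
      rw [← Real.log_rpow hBpos]
      exact Real.log_le_log hApos h1
    have l2 : Real.log B ≤ (1 - β) / (1 - α) * Real.log A := by
      rw [← Real.log_rpow hApos]
      exact Real.log_le_log hBpos h2
    have hβ0' : β ≠ 0 := hβ0.ne'
    have h1α' : (1:ℝ) - α ≠ 0 := h1α.ne'
    have h1β' : (1:ℝ) - β ≠ 0 := h1β.ne'
    have hβ1' : β - 1 ≠ 0 := by intro h; apply h1β'; linarith
    have hα1' : α - 1 ≠ 0 := by intro h; apply h1α'; linarith
    constructor
    · have e1 : (α / β) * ((1 - β) / (1 - α)) * ((1 / (β - 1)) * Real.log B)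
          = -((α / β) * Real.log B) / (1 - α) := by
        field_simp
        ring
      have e2 : (1 / (α - 1)) * Real.log A = -Real.log A / (1 - α) := by
        field_simp
        ring
      rw [e1, e2]
      exact (div_le_div_iff_of_pos_right h1α).mpr (by linarith)
    · have e1 : (1 / (β - 1)) * Real.log B = -Real.log B / (1 - β) := by
        field_simp
        ring
      have e2 : (1 / (α - 1)) * Real.log A = -Real.log A / (1 - α) := by
        field_simp
        ring
      rw [e1, e2, div_le_div_iff₀ h1α h1β]
      rw [div_mul_eq_mul_div, le_div_iff₀ h1α] at l2
      nlinarith [l2]
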